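/- arXiv:cs/0505013 — 2 statements merged into one kernel-verified Lean document; each statement's English description precedes it below -/
import Mathlib

section
/- Define the carry predicate carry(i, X, Y) to hold iff there exists j < i such that j ∈ X, j ∈ Y, and for all ℓ with j < ℓ < i, exactly one of ℓ ∈ X, ℓ ∈ Y holds. Define the string sum X + Y as the set of i such that (i ∈ X) XOR (i ∈ Y) XOR carry(i, X, Y). Then for finite X, Y ⊆ ℕ, the number represented by X + Y equals the sum of the numbers represented by X and Y, where a finite set S represents the number ∑_{i ∈ S} 2^i. -/
/-- carry at bit position i when adding X and Y. -/
def carry (i : ℕ) (X Y : Finset ℕ) : Prop :=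
  ∃ j < i, j ∈ X ∧ j ∈ Y ∧ ∀ ℓ, j < ℓ → ℓ < i → Xor' (ℓ ∈ X) (ℓ ∈ Y)

/-- the number represented by a finite set of bit positions. -/
def num (S : Finset ℕ) : ℕ := ∑ i ∈ S, 2 ^ i

lemma carry_zero (X Y : Finset ℕ) : ¬ carry 0 X Y := by
  rintro ⟨j, hj, _⟩; omega

lemma carry_succ (i : ℕ) (X Y : Finset ℕ) :
    carry (i+1) X Y ↔ (i ∈ X ∧ i ∈ Y) ∨ (Xor' (i ∈ X) (i ∈ Y) ∧ carry i X Y) := by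
  constructor
  · rintro ⟨j, hj, hx, hy, hall⟩
    rcases eq_or_lt_of_le (Nat.lt_succ_iff.mp hj) with rfl | hj'
    · exact Or.inl ⟨hx, hy⟩
    · exact Or.inr ⟨hall i hj' (Nat.lt_succ_self i),
        ⟨j, hj', hx, hy, fun ℓ h1 h2 => hall ℓ h1 (h2.trans (Nat.lt_succ_self i))⟩⟩
  · rintro (⟨hx, hy⟩ | ⟨hxor, j, hj, hx, hy, hall⟩)
    · exact ⟨i, Nat.lt_succ_self i, hx, hy, fun ℓ h1 h2 => by omega⟩
    · refine ⟨j, by omega, hx, hy, fun ℓ h1 h2 => ?_⟩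
      rcases eq_or_lt_of_le (Nat.lt_succ_iff.mp h2) with rfl | h2'
      · exact hxor
      · exact hall ℓ h1 h2'

lemma num_inter (T : Finset ℕ) (i : ℕ) :
    num (T ∩ Finset.range i) = ∑ j ∈ Finset.range i, if j ∈ T then 2 ^ j else 0 := by
  rw [num, ← Finset.sum_filter]
  congr 1
  ext x
  simp [Finset.mem_inter, Finset.mem_filter, and_comm]

open scoped Classical in
lemma main_lemma (X Y S : Finset ℕ)
    (hS : ∀ i, i ∈ S ↔ Xor' (Xor' (i ∈ X) (i ∈ Y)) (carry i X Y)) (i : ℕ) :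
    num (S ∩ Finset.range i) + (if carry i X Y then 2 ^ i else 0)
      = num (X ∩ Finset.range i) + num (Y ∩ Finset.range i) := by
  classical
  induction i with
  | zero => simp [num, carry_zero]
  | succ i ih =>
    rw [num_inter, num_inter, num_inter, Finset.sum_range_succ, Finset.sum_range_succ,
      Finset.sum_range_succ, ← num_inter, ← num_inter, ← num_inter]
    have hs := hS i
    have hcs := carry_succ i X Y
    have hp : (2:ℕ) ^ (i+1) = 2 ^ i * 2 := pow_succ 2 i
    rcases Classical.em (i ∈ X) with ha | ha <;>
      rcases Classical.em (i ∈ Y) with hb | hb <;>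
        rcases Classical.em (carry i X Y) with hc | hc <;>
          simp only [ha, hb, hc, Xor', Xor, iff_true, iff_false, not_true, not_false_iff,
            true_and, and_true, false_and, and_false, true_or, or_true, false_or, or_false,
            or_self, and_self, not_true_eq_false, not_false_eq_true, iff_self] at hs hcs <;>
          simp only [hs, hcs, ha, hb, hc, if_true, if_false, if_pos, if_neg, not_false_iff,
            hp] at * <;>
          omega

theorem string_add_correct (X Y S : Finset ℕ)
    (hS : ∀ i, i ∈ S ↔ Xor' (Xor' (i ∈ X) (i ∈ Y)) (carry i X Y)) :
    num S = num X + num Y := by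
  classical
  set M := (X ∪ Y ∪ S).sup id with hM
  have hbound : ∀ x, x ∈ X ∪ Y ∪ S → x ≤ M := fun x hx => Finset.le_sup (f := id) hx
  set N := M + 2 with hN
  have hXb : ∀ x ∈ X, x ≤ M := fun x hx => hbound x (by simp [Finset.mem_union, hx])
  have hYb : ∀ x ∈ Y, x ≤ M := fun x hx => hbound x (by simp [Finset.mem_union, hx])
  have hSb : ∀ x ∈ S, x ≤ M := fun x hx => hbound x (by simp [Finset.mem_union, hx])
  have hXN : X ∩ Finset.range N = X := by
    apply Finset.inter_eq_left.mpr
    intro x hx; simp [Finset.mem_range]; have := hXb x hx; omega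
  have hYN : Y ∩ Finset.range N = Y := by
    apply Finset.inter_eq_left.mpr
    intro x hx; simp [Finset.mem_range]; have := hYb x hx; omega
  have hSN : S ∩ Finset.range N = S := by
    apply Finset.inter_eq_left.mpr
    intro x hx; simp [Finset.mem_range]; have := hSb x hx; omega
  have hnc : ¬ carry N X Y := by
    rintro ⟨j, hj, hx, hy, hall⟩
    have hjM : j ≤ M := hXb j hx
    have := hall (M+1) (by omega) (by omega)
    rcases this with ⟨h1, _⟩ | ⟨h1, _⟩
    · have := hXb _ h1; omega
    · have := hYb _ h1; omega
  have := main_lemma X Y S hS N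
  rw [hXN, hYN, hSN, if_neg hnc] at this
  omega
end

section
/- Let W : ℕ → ℕ with W(i) ≤ n for all i < m (column counts), let ℓ = 1 + ⌈log₂ n⌉ and k = ⌈m/(2ℓ)⌉, and for i < 2k let b_i = ∑_{j<ℓ} 2^j · W(iℓ + j) (treating W(i) = 0 for i ≥ m). Then each b_i < 2^{2ℓ}, and ∑_{i<m} 2^i W(i) = L + H where L = ∑_{i<k} 2^{2iℓ} b_{2i} and H = ∑_{i<k} 2^{(2i+1)ℓ} b_{2i+1}. -/
lemma sum_range_mul_block (g : ℕ → ℕ) (ℓ N : ℕ) :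
    ∑ i ∈ Finset.range (N * ℓ), g i =
      ∑ i ∈ Finset.range N, ∑ j ∈ Finset.range ℓ, g (i * ℓ + j) := by
  induction N with
  | zero => simp
  | succ N ih =>
    rw [Finset.sum_range_succ, ← ih, Nat.succ_mul, Finset.range_eq_Ico,
      ← Finset.sum_Ico_consecutive g (Nat.zero_le (N * ℓ)) (Nat.le_add_right _ ℓ),
      ← Finset.range_eq_Ico]
    congr 1
    rw [Finset.sum_Ico_eq_sum_range]
    simp [Nat.add_sub_cancel_left, Nat.add_comm]

lemma sum_range_even_odd (F : ℕ → ℕ) (k : ℕ) :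
    ∑ i ∈ Finset.range (2 * k), F i =
      (∑ i ∈ Finset.range k, F (2 * i)) + ∑ i ∈ Finset.range k, F (2 * i + 1) := by
  induction k with
  | zero => simp
  | succ k ih =>
    have : 2 * (k + 1) = (2 * k) + 1 + 1 := by ring
    rw [this, Finset.sum_range_succ, Finset.sum_range_succ,
      Finset.sum_range_succ (fun i => F (2 * i)) k, Finset.sum_range_succ (fun i => F (2 * i + 1)) k, ih]
    ring

theorem block_decomposition (W : ℕ → ℕ) (n m : ℕ) (hn : 1 ≤ n)
    (hW : ∀ i < m, W i ≤ n) (hW0 : ∀ i, m ≤ i → W i = 0)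
    (ℓ k : ℕ) (hℓ : ℓ = 1 + Nat.clog 2 n) (hk : k = (m + 2 * ℓ - 1) / (2 * ℓ))
    (b : ℕ → ℕ) (hb : ∀ i, b i = ∑ j ∈ Finset.range ℓ, 2 ^ j * W (i * ℓ + j)) :
    (∀ i < 2 * k, b i < 2 ^ (2 * ℓ)) ∧
    ∑ i ∈ Finset.range m, 2 ^ i * W i =
      (∑ i ∈ Finset.range k, 2 ^ (2 * i * ℓ) * b (2 * i)) +
      (∑ i ∈ Finset.range k, 2 ^ ((2 * i + 1) * ℓ) * b (2 * i + 1)) := by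
  have hℓ1 : 1 ≤ ℓ := by omega
  have hWn : ∀ i, W i ≤ n := by
    intro i
    by_cases h : i < m
    · exact hW i h
    · rw [hW0 i (by omega)]; omega
  have hnℓ : n < 2 ^ ℓ := by
    have h1 : n ≤ 2 ^ Nat.clog 2 n := Nat.le_pow_clog (by norm_num) n
    have : 2 ^ ℓ = 2 * 2 ^ Nat.clog 2 n := by rw [hℓ, pow_add, pow_one]
    omega
  -- part 1
  have hb_lt : ∀ i, b i < 2 ^ (2 * ℓ) := by
    intro i
    have h1 : b i ≤ ∑ j ∈ Finset.range ℓ, 2 ^ j * n := by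
      rw [hb]
      exact Finset.sum_le_sum fun j _ => Nat.mul_le_mul_left _ (hWn _)
    have h2 : ∑ j ∈ Finset.range ℓ, 2 ^ j * n = (2 ^ ℓ - 1) * n := by
      rw [← Finset.sum_mul, Nat.geomSum_eq (le_refl 2)]
      norm_num
    have h3 : (2 ^ ℓ - 1) * n < 2 ^ ℓ * 2 ^ ℓ := by
      have hp : 1 ≤ 2 ^ ℓ := Nat.one_le_two_pow
      calc (2 ^ ℓ - 1) * n < 2 ^ ℓ * n := by
            apply Nat.mul_lt_mul_of_lt_of_le (by omega) (le_refl n) hn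
        _ ≤ 2 ^ ℓ * 2 ^ ℓ := Nat.mul_le_mul_left _ (le_of_lt hnℓ)
    rw [two_mul, pow_add]
    omega
  refine ⟨fun i _ => hb_lt i, ?_⟩
  -- part 2
  have hmk : m ≤ 2 * k * ℓ := by
    have hd : 0 < 2 * ℓ := by omega
    have h1 := Nat.div_add_mod (m + 2 * ℓ - 1) (2 * ℓ)
    have h2 := Nat.mod_lt (m + 2 * ℓ - 1) hd
    have : 2 * k * ℓ = 2 * ℓ * ((m + 2 * ℓ - 1) / (2 * ℓ)) := by rw [hk]; ring
    rw [this]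
    omega
  have hext : ∑ i ∈ Finset.range m, 2 ^ i * W i =
      ∑ i ∈ Finset.range (2 * k * ℓ), 2 ^ i * W i := by
    apply Finset.sum_subset (Finset.range_subset_range.mpr hmk)
    intro x _ hx
    rw [hW0 x (by simpa using hx)]
    ring
  rw [hext, sum_range_mul_block (fun i => 2 ^ i * W i) ℓ (2 * k)]
  have hinner : ∀ i, ∑ j ∈ Finset.range ℓ, 2 ^ (i * ℓ + j) * W (i * ℓ + j)
      = 2 ^ (i * ℓ) * b i := by
    intro i
    rw [hb, Finset.mul_sum]
    apply Finset.sum_congr rfl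
    intro j _
    rw [pow_add]; ring
  simp only [hinner]
  rw [sum_range_even_odd (fun i => 2 ^ (i * ℓ) * b i) k]
end
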